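/- arXiv:1110.5029 — 5 statements merged into one kernel-verified Lean document; each statement's English description precedes it below -/
import Mathlib

section
/- Let Γ be the free group of rank 2 with generators s₁, s₂. The map φ : (ℤ/2ℤ)^Γ → (ℤ/2ℤ × ℤ/2ℤ)^Γ defined by φ(x)(g) = (x(g) + x(g·s₁), x(g) + x(g·s₂)) is a surjective group homomorphism (with respect to pointwise addition) which is equivariant with respect to the shift actions of Γ. -/
/-- The shift action of the free group `Γ` on `K^Γ`: `(g • x)(f) = x(g⁻¹ f)`. -/
def shiftAct {K : Type*} (g : FreeGroup (Fin 2)) (x : FreeGroup (Fin 2) → K) :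
    FreeGroup (Fin 2) → K := fun f => x (g⁻¹ * f)

/-- The Ornstein–Weiss map `φ(x)(g) = (x(g)+x(g s₁), x(g)+x(g s₂))`. -/
def phiOW (x : FreeGroup (Fin 2) → ZMod 2) : FreeGroup (Fin 2) → ZMod 2 × ZMod 2 :=
  fun g => (x g + x (g * FreeGroup.of 0), x g + x (g * FreeGroup.of 1))

/-- Component selector. -/
def owComp (i : Fin 2) (p : ZMod 2 × ZMod 2) : ZMod 2 := if i = 0 then p.1 else p.2

/-- Sum of edge labels of `y` along the tree path determined by a word (read as the
reduced word of `g⁻¹`). -/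
def owAux (y : FreeGroup (Fin 2) → ZMod 2 × ZMod 2) : List (Fin 2 × Bool) → ZMod 2
  | [] => 0
  | (i, b) :: r =>
      owAux y r + owComp i (y ((cond b (FreeGroup.of i) 1 * FreeGroup.mk r)⁻¹))

lemma ow_inv_word (g : FreeGroup (Fin 2)) (i : Fin 2) :
    (g * FreeGroup.of i)⁻¹.toWord = FreeGroup.reduce ((i, false) :: g⁻¹.toWord) := by
  have h1 : (g * FreeGroup.of i)⁻¹ = FreeGroup.mk ((i, false) :: g⁻¹.toWord) := by
    have h2 : FreeGroup.mk [((i : Fin 2), false)] = (FreeGroup.of i)⁻¹ := by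
      rw [show FreeGroup.of i = FreeGroup.mk [(i, true)] from rfl, FreeGroup.inv_mk]; rfl
    have : ((i, false) : Fin 2 × Bool) :: g⁻¹.toWord = [(i, false)] ++ g⁻¹.toWord := rfl
    rw [this, ← FreeGroup.mul_mk, FreeGroup.mk_toWord, h2, mul_inv_rev]
  rw [h1, FreeGroup.toWord_mk]

lemma owAux_key (y : FreeGroup (Fin 2) → ZMod 2 × ZMod 2) (g : FreeGroup (Fin 2))
    (i : Fin 2) :
    owAux y ((g * FreeGroup.of i)⁻¹.toWord) = owAux y (g⁻¹.toWord) + owComp i (y g) := by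
  have hred : FreeGroup.reduce g⁻¹.toWord = g⁻¹.toWord := FreeGroup.reduce_toWord _
  have hmk : FreeGroup.mk g⁻¹.toWord = g⁻¹ := FreeGroup.mk_toWord
  rw [ow_inv_word]
  rw [FreeGroup.reduce.cons, hred]
  rcases hL : g⁻¹.toWord with _ | ⟨⟨j, b⟩, tl⟩
  · -- g = 1 side: word is [(i,false)]
    simp only [List.casesOn]
    show owAux y [(i, false)] = owAux y [] + owComp i (y g)
    simp only [owAux, cond, one_mul]
    rw [show FreeGroup.mk ([] : List (Fin 2 × Bool)) = 1 from rfl, inv_one]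
    have hg : g = 1 := by
      have := hmk; rw [hL] at this
      have : (1 : FreeGroup (Fin 2)) = g⁻¹ := this
      simpa using this.symm
    rw [hg]
  · by_cases hc : (i = j ∧ false = !b)
    · -- cancellation: b = true, j = i
      obtain ⟨hij, hb⟩ := hc
      have hb' : b = true := by cases b with | false => exact absurd hb (by decide) | true => rfl
      subst hij hb'
      simp only [if_pos (And.intro rfl rfl)]
      -- goal: owAux y tl = owAux y ((i,true)::tl) + owComp i (y g)
      have : owAux y (((i, true)) :: tl) =
          owAux y tl + owComp i (y ((FreeGroup.of i * FreeGroup.mk tl)⁻¹)) := rfl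
      rw [this]
      have h2 : FreeGroup.of i * FreeGroup.mk tl = g⁻¹ := by
        rw [← hmk, hL, show FreeGroup.of i = FreeGroup.mk [(i, true)] from rfl,
          FreeGroup.mul_mk, List.singleton_append]
      rw [h2, inv_inv]
      have : ∀ a c : ZMod 2, a = a + c + c := by decide
      exact this _ _
    · -- no cancellation
      simp only [if_neg hc]
      have : owAux y ((i, false) :: (j, b) :: tl) =
          owAux y ((j, b) :: tl) + owComp i (y ((1 * FreeGroup.mk ((j, b) :: tl))⁻¹)) := rfl
      rw [this, one_mul, ← hL, hmk, inv_inv]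

/-- `φ` is a surjective homomorphism (for pointwise addition), equivariant
with respect to the shift actions of the free group of rank 2. -/
theorem phiOW_surjective_hom_equivariant :
    Function.Surjective phiOW ∧
    (∀ x y : FreeGroup (Fin 2) → ZMod 2, phiOW (x + y) = phiOW x + phiOW y) ∧
    (∀ (g : FreeGroup (Fin 2)) (x : FreeGroup (Fin 2) → ZMod 2),
      phiOW (shiftAct g x) = shiftAct g (phiOW x)) := by
  refine ⟨?_, ?_, ?_⟩
  · intro y
    refine ⟨fun g => owAux y (g⁻¹.toWord), ?_⟩
    funext g
    have h0 := owAux_key y g 0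
    have h1 := owAux_key y g 1
    have hadd : ∀ a c : ZMod 2, a + (a + c) = c := by decide
    simp only [phiOW, h0, h1, hadd]
    show (owComp 0 (y g), owComp 1 (y g)) = y g
    simp [owComp]
  · intro x y
    funext g
    simp only [phiOW, Pi.add_apply, Prod.mk_add_mk, Prod.mk.injEq]
    constructor <;> ring
  · intro g x
    funext f
    simp only [phiOW, shiftAct, mul_assoc]
end

section
/- Let Γ be a free group of finite rank with free generating set S and Cayley graph C (vertex set Γ, edges {g, gs} for g ∈ Γ, s ∈ S). Let K ⊂ Γ be a finite connected subset of radius r ≥ 1 whose center is the identity element e (i.e., r is the smallest number such that some ball of radius r contains K, and B(e,r) ⊇ K). Then there exist elements v, w ∈ K with |v| = r, |w| ∈ {r-1, r}, and [e,v] ∩ [e,w] = {e}, where [a,b] denotes the geodesic segment between a and b in the Cayley graph. -/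
/-- Word length of an element of the free group with respect to the free generators. -/
def wordLen {r : ℕ} (g : FreeGroup (Fin r)) : ℕ := g.toWord.length

/-- The Cayley graph of the free group of rank `r`, with edges `{g, g·sᵢ}`. -/
def cayley (r : ℕ) : SimpleGraph (FreeGroup (Fin r)) where
  Adj g h := g ≠ h ∧ ∃ i : Fin r, h = g * FreeGroup.of i ∨ g = h * FreeGroup.of i
  symm := by
    constructor
    rintro g h ⟨hne, i, hi⟩
    exact ⟨hne.symm, i, hi.symm⟩
  loopless := by constructor; rintro g ⟨hne, -⟩; exact hne rfl

/-- A subset of the free group is connected if its induced subgraph in the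
Cayley graph is connected. -/
def ConnSet {r : ℕ} (K : Set (FreeGroup (Fin r))) : Prop :=
  ((cayley r).induce K).Connected

/-- The ball of radius `n` centered at `v` in the word metric. -/
def wball {r : ℕ} (v : FreeGroup (Fin r)) (n : ℕ) : Set (FreeGroup (Fin r)) :=
  {g | wordLen (v⁻¹ * g) ≤ n}

/-- `n` is the radius of `K`: the smallest number such that some ball of
radius `n` contains `K`. -/
def IsRadius {r : ℕ} (K : Set (FreeGroup (Fin r))) (n : ℕ) : Prop :=
  (∃ v, K ⊆ wball v n) ∧ ∀ m : ℕ, (∃ v, K ⊆ wball v m) → n ≤ m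

/-- The geodesic segment `[v,w]`: all points on the shortest path from `v` to `w`. -/
def seg {r : ℕ} (v w : FreeGroup (Fin r)) : Set (FreeGroup (Fin r)) :=
  {g | wordLen (v⁻¹ * g) + wordLen (g⁻¹ * w) = wordLen (v⁻¹ * w)}

/-- The extreme points of `K`: elements of `K` of degree 1 in the induced subgraph. -/
def extremePts {r : ℕ} (K : Set (FreeGroup (Fin r))) : Set (FreeGroup (Fin r)) :=
  {f ∈ K | ∃! k, k ∈ K ∧ (cayley r).Adj f k}

/-- `H` is the convex hull of `F`: the smallest connected set containing `F`. -/
def IsHull {r : ℕ} (F H : Set (FreeGroup (Fin r))) : Prop :=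
  ConnSet H ∧ F ⊆ H ∧ ∀ C, ConnSet C → F ⊆ C → H ⊆ C

lemma wordLen_eq_norm {r : ℕ} (g : FreeGroup (Fin r)) : wordLen g = FreeGroup.norm g := rfl

/-- if |x| + |x⁻¹ v| = |v| then `x.toWord` is a prefix of `v.toWord`. -/
lemma prefix_of_seg {r : ℕ} {x v : FreeGroup (Fin r)}
    (h : wordLen x + wordLen (x⁻¹ * v) = wordLen v) :
    ∃ t, v.toWord = x.toWord ++ t := by
  have hs := FreeGroup.toWord_mul_sublist x (x⁻¹ * v)
  rw [mul_inv_cancel_left] at hs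
  have hlen : v.toWord.length = (x.toWord ++ (x⁻¹ * v).toWord).length := by
    simp only [List.length_append]
    simpa [wordLen] using h.symm
  exact ⟨(x⁻¹ * v).toWord, hs.eq_of_length hlen⟩

/-- one always lies on the segment from one to anything. -/
lemma one_mem_seg {r : ℕ} (v : FreeGroup (Fin r)) : (1 : FreeGroup (Fin r)) ∈ seg 1 v := by
  simp [seg, wordLen]

/-- a finite connected set `K` of radius `rad ≥ 1` centered at the
identity contains elements `v, w` with `|v| = rad`, `|w| ∈ {rad-1, rad}` and
`[e,v] ∩ [e,w] = {e}`. -/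
theorem exists_two_extremal_directions {r : ℕ} (K : Set (FreeGroup (Fin r)))
    (hKfin : K.Finite) (hKconn : ConnSet K) (rad : ℕ) (hrad : IsRadius K rad)
    (hrad1 : 1 ≤ rad) (hcenter : K ⊆ wball 1 rad) :
    ∃ v ∈ K, ∃ w ∈ K, wordLen v = rad ∧ (wordLen w = rad - 1 ∨ wordLen w = rad) ∧
      seg 1 v ∩ seg 1 w = {1} := by
  -- every element of K has word length at most rad
  have hle : ∀ g ∈ K, wordLen g ≤ rad := by
    intro g hg
    have := hcenter hg
    simpa [wball] using this
  -- there is an element of K of word length exactly rad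
  have hexv : ∃ v ∈ K, wordLen v = rad := by
    by_contra hc
    push_neg at hc
    have hsub : K ⊆ wball 1 (rad - 1) := by
      intro g hg
      have h1 := hle g hg
      have h2 := hc g hg
      simp only [wball, inv_one, one_mul, Set.mem_setOf_eq]
      omega
    have := hrad.2 (rad - 1) ⟨1, hsub⟩
    omega
  obtain ⟨v, hv, hvlen⟩ := hexv
  by_contra hcon
  push_neg at hcon
  -- v has a nonempty reduced word; let l be its first letter
  have hvne : v.toWord ≠ [] := by
    intro h
    rw [wordLen, h] at hvlen
    simp at hvlen
    omega
  obtain ⟨l, tv, hvw⟩ := List.exists_cons_of_ne_nil hvne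
  -- claim: K ⊆ ball of radius rad - 1 around (mk [l])
  have hsub : K ⊆ wball (FreeGroup.mk [l]) (rad - 1) := by
    intro g hg
    have hgle := hle g hg
    simp only [wball, Set.mem_setOf_eq]
    by_cases hshort : wordLen g + 2 ≤ rad
    · -- short elements: triangle inequality
      have h1 : wordLen ((FreeGroup.mk [l])⁻¹ * g) ≤
          wordLen (FreeGroup.mk [l])⁻¹ + wordLen g := by
        rw [wordLen_eq_norm, wordLen_eq_norm, wordLen_eq_norm]
        exact FreeGroup.norm_mul_le _ _
      have h2 : wordLen (FreeGroup.mk [l])⁻¹ = wordLen (FreeGroup.mk [l]) := by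
        rw [wordLen_eq_norm, wordLen_eq_norm]
        exact FreeGroup.norm_inv_eq
      have h3 : wordLen (FreeGroup.mk [l]) ≤ 1 := by
        rw [wordLen_eq_norm]
        exact FreeGroup.norm_mk_le
      omega
    · -- long elements: wordLen g = rad - 1 or rad, use the contradiction hypothesis
      have hlong : wordLen g = rad - 1 ∨ wordLen g = rad := by omega
      have hne := hcon v hv g hg hvlen hlong
      -- seg 1 v ∩ seg 1 g ≠ {1}, so there is x ≠ 1 in both
      have h1mem : (1 : FreeGroup (Fin r)) ∈ seg 1 v ∩ seg 1 g :=
        ⟨one_mem_seg v, one_mem_seg g⟩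
      have hnsub : ¬ (seg 1 v ∩ seg 1 g ⊆ {1}) := by
        intro hs
        exact hne (Set.Subset.antisymm hs (by simpa using h1mem))
      obtain ⟨x, hx, hx1⟩ := Set.not_subset.mp hnsub
      simp only [Set.mem_singleton_iff] at hx1
      obtain ⟨hxv, hxg⟩ := hx
      simp only [seg, inv_one, one_mul, Set.mem_setOf_eq] at hxv hxg
      -- x.toWord is a nonempty common prefix of v.toWord and g.toWord
      obtain ⟨t1, ht1⟩ := prefix_of_seg hxv
      obtain ⟨t2, ht2⟩ := prefix_of_seg hxg
      have hxne : x.toWord ≠ [] := fun h => hx1 (FreeGroup.toWord_eq_nil_iff.mp h)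
      obtain ⟨x0, xt, hxw⟩ := List.exists_cons_of_ne_nil hxne
      -- first letter of x equals l
      have hx0 : x0 = l := by
        rw [hxw] at ht1
        rw [hvw] at ht1
        exact (List.cons.injEq _ _ _ _ ▸ ht1).1.symm
      -- g.toWord = l :: (xt ++ t2)
      have hgw : g.toWord = l :: (xt ++ t2) := by
        rw [ht2, hxw, hx0]
        rfl
      -- hence (mk [l])⁻¹ * g = mk (xt ++ t2)
      have hfact : (FreeGroup.mk [l])⁻¹ * g = FreeGroup.mk (xt ++ t2) := by
        have : g = FreeGroup.mk [l] * FreeGroup.mk (xt ++ t2) := by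
          rw [FreeGroup.mul_mk, List.singleton_append, ← hgw, FreeGroup.mk_toWord]
        rw [this, inv_mul_cancel_left]
      rw [hfact]
      have hb : wordLen (FreeGroup.mk (xt ++ t2)) ≤ (xt ++ t2).length := by
        rw [wordLen_eq_norm]
        exact FreeGroup.norm_mk_le
      have hlg : (xt ++ t2).length + 1 = wordLen g := by
        rw [wordLen, hgw]
        simp
      omega
  have := hrad.2 (rad - 1) ⟨FreeGroup.mk [l], hsub⟩
  omega
end

section
/- Let Γ be a free group of finite rank with Cayley graph C. Let K ⊂ Γ be a finite connected set of radius r ≥ 1 with the identity e as a center. If g₁,...,g_n ∈ Γ \ {e} satisfy K ⊆ ⋃_{i=1}^n g_i·K, then e is contained in the convex hull of {g₁,...,g_n}. -/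
open scoped Pointwise

namespace CenterHullAux

open FreeGroup

variable {α : Type*} [DecidableEq α]

theorem reduce_cons_of_reduced (x : α × Bool) (L : List (α × Bool)) (h : FreeGroup.reduce L = L) :
    FreeGroup.reduce (x :: L) =
      if L.head? = some (x.1, !x.2) then L.tail else x :: L := by
  rw [FreeGroup.reduce.cons, h]
  cases L with
  | nil => simp
  | cons y t =>
    obtain ⟨x1, x2⟩ := x
    obtain ⟨y1, y2⟩ := y
    by_cases h1 : x1 = y1
    · subst h1
      cases x2 <;> cases y2 <;> simp
    · simp [h1, Ne.symm h1, Prod.ext_iff]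

theorem reduced_cons (x : α × Bool) (L : List (α × Bool))
    (h : FreeGroup.reduce (x :: L) = x :: L) :
    FreeGroup.reduce L = L ∧ L.head? ≠ some (x.1, !x.2) := by
  have hlen : (FreeGroup.reduce L).length ≤ L.length :=
    (FreeGroup.reduce.red (L := L)).length_le
  rw [FreeGroup.reduce.cons] at h
  cases hr : FreeGroup.reduce L with
  | nil =>
    rw [hr] at h
    simp only [List.casesOn] at h
    have : L = [] := by
      have := congrArg List.tail h
      simpa using this.symm
    subst this
    simp
  | cons y t =>
    rw [hr] at h
    simp only at h
    split at h
    · exfalso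
      rw [hr] at hlen
      have : t = x :: L := h
      simp [this] at hlen
    · rename_i hcond
      have hL : L = y :: t := by
        have := congrArg List.tail h
        simpa using this.symm
      constructor
      · rw [hL, ← hr, hL]
      · rw [hL]
        simp only [List.head?_cons, ne_eq, Option.some.injEq]
        rintro rfl
        simp at hcond

theorem toWord_single_mul (x : α × Bool) (y : FreeGroup α) :
    (FreeGroup.mk [x] * y).toWord =
      if y.toWord.head? = some (x.1, !x.2) then y.toWord.tail else x :: y.toWord := by
  conv_lhs => rw [← FreeGroup.mk_toWord (x := y)]
  rw [FreeGroup.mul_mk, FreeGroup.toWord_mk]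
  exact reduce_cons_of_reduced x y.toWord (FreeGroup.reduce_toWord y)

theorem inv_mk_single (x : α × Bool) :
    (FreeGroup.mk [x])⁻¹ = FreeGroup.mk [(x.1, !x.2)] := by
  rw [FreeGroup.inv_mk]
  rfl

theorem len_inv_mul (L : List (α × Bool)) (y : FreeGroup α) (hL : FreeGroup.reduce L = L)
    (h : y.toWord.head? ≠ L.head?) :
    ((FreeGroup.mk L)⁻¹ * y).toWord.length = L.length + y.toWord.length := by
  induction L generalizing y with
  | nil =>
    rw [← FreeGroup.one_eq_mk, inv_one, one_mul]
    simp
  | cons x t ih =>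
    obtain ⟨ht, hhead⟩ := reduced_cons x t hL
    have hxy : (FreeGroup.mk [(x.1, !x.2)] * y).toWord = (x.1, !x.2) :: y.toWord := by
      rw [toWord_single_mul]
      rw [if_neg]
      simp only [Bool.not_not]
      exact fun hc => h (by simpa using hc)
    have key : (FreeGroup.mk (x :: t))⁻¹ * y
        = (FreeGroup.mk t)⁻¹ * (FreeGroup.mk [(x.1, !x.2)] * y) := by
      have : FreeGroup.mk (x :: t) = FreeGroup.mk [x] * FreeGroup.mk t := by
        rw [FreeGroup.mul_mk]; rfl
      rw [this, mul_inv_rev, inv_mk_single, mul_assoc]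
    rw [key, ih (FreeGroup.mk [(x.1, !x.2)] * y) ht (by rw [hxy]; simpa using fun hc => hhead hc.symm),
      hxy]
    simp
    omega

theorem wordLen_inv_mul' (u y : FreeGroup α) (h : y.toWord.head? ≠ u.toWord.head?) :
    (u⁻¹ * y).toWord.length = u.toWord.length + y.toWord.length := by
  have := len_inv_mul u.toWord y (FreeGroup.reduce_toWord u) h
  rwa [FreeGroup.mk_toWord] at this

theorem head?_toWord_eq (w : FreeGroup α) :
    w.toWord.head? = Option.map (fun p : α × Bool => (p.1, !p.2)) (w⁻¹.toWord.getLast?) := by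
  conv_lhs => rw [← inv_inv w, FreeGroup.toWord_inv, FreeGroup.invRev]
  rw [List.head?_reverse, List.getLast?_map]

theorem getLast?_cons_of_ne (a : α × Bool) (l : List (α × Bool)) (h : l ≠ []) :
    (a :: l).getLast? = l.getLast? := by
  cases l with
  | nil => exact absurd rfl h
  | cons b t => rw [List.getLast?_cons_cons]

theorem adj_head (u v : FreeGroup α) (hu : u ≠ 1) (hv : v ≠ 1) (i : α) (h : v = u * FreeGroup.of i) :
    u.toWord.head? = v.toWord.head? := by
  have hofi : (FreeGroup.of i)⁻¹ = FreeGroup.mk [(i, false)] := by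
    rw [show FreeGroup.of i = FreeGroup.mk [(i, true)] from rfl, FreeGroup.inv_mk]; rfl
  have h1 : v⁻¹ = FreeGroup.mk [(i, false)] * u⁻¹ := by
    rw [h, mul_inv_rev, hofi]
  have h2 := toWord_single_mul (α := α) (i, false) u⁻¹
  rw [← h1] at h2
  have hune : u⁻¹.toWord ≠ [] := by
    rw [ne_eq, FreeGroup.toWord_eq_nil_iff, inv_eq_one]; exact hu
  have hvne : v⁻¹.toWord ≠ [] := by
    rw [ne_eq, FreeGroup.toWord_eq_nil_iff, inv_eq_one]; exact hv
  rw [head?_toWord_eq u, head?_toWord_eq v]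
  congr 1
  split at h2
  · -- v⁻¹.toWord = tail u⁻¹.toWord
    cases hl : u⁻¹.toWord with
    | nil => exact absurd hl hune
    | cons b t =>
      rw [hl] at h2
      simp only [List.tail_cons] at h2
      rw [getLast?_cons_of_ne b t (by rw [← h2]; exact hvne), ← h2]
  · rw [h2, getLast?_cons_of_ne _ _ hune]

theorem wordLen_pos (u : FreeGroup α) (hu : u ≠ 1) : 1 ≤ u.toWord.length := by
  rcases Nat.eq_zero_or_pos u.toWord.length with h | h
  · exact absurd (FreeGroup.toWord_eq_nil_iff.mp (List.length_eq_zero_iff.mp h)) hu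
  · exact h

end CenterHullAux

open CenterHullAux

theorem head_const_on_conn {r : ℕ} {H : Set (FreeGroup (Fin r))}
    (hH : ((cayley r).induce H).Connected) (h1 : (1 : FreeGroup (Fin r)) ∉ H)
    {u v : FreeGroup (Fin r)} (hu : u ∈ H) (hv : v ∈ H) :
    u.toWord.head? = v.toWord.head? := by
  have key : ∀ (a b : ↥H), ((cayley r).induce H).Walk a b →
      (a : FreeGroup (Fin r)).toWord.head? = (b : FreeGroup (Fin r)).toWord.head? := by
    intro a b p
    induction p with
    | nil => rfl
    | cons hadj p ih =>
      rename_i c d e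
      refine Eq.trans ?_ ih
      obtain ⟨hne, i, hcase⟩ := hadj
      have hc1 : (c : FreeGroup (Fin r)) ≠ 1 := fun h => h1 (h ▸ c.2)
      have hd1 : (d : FreeGroup (Fin r)) ≠ 1 := fun h => h1 (h ▸ d.2)
      rcases hcase with hcd | hdc
      · exact adj_head _ _ hc1 hd1 i hcd
      · exact (adj_head _ _ hd1 hc1 i hdc).symm
  obtain ⟨p⟩ := hH.preconnected ⟨u, hu⟩ ⟨v, hv⟩
  exact key _ _ p


/-- if a finite connected set `K` of radius `rad ≥ 1` centered at the
identity satisfies `K ⊆ ⋃ᵢ gᵢ·K` with all `gᵢ ≠ e`, then `e` lies in the convex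
hull of `{g₁,…,g_n}`. -/
theorem center_mem_hull_of_cover {r n : ℕ} (K : Set (FreeGroup (Fin r)))
    (hKfin : K.Finite) (hKconn : ConnSet K) (rad : ℕ) (hrad : IsRadius K rad)
    (hrad1 : 1 ≤ rad) (hcenter : K ⊆ wball 1 rad)
    (g : Fin n → FreeGroup (Fin r)) (hg : ∀ i, g i ≠ 1)
    (hcover : K ⊆ ⋃ i, g i • K) :
    ∀ H, IsHull (Set.range g) H → (1 : FreeGroup (Fin r)) ∈ H := by
  intro H hHull
  by_contra h1H
  obtain ⟨hHconn, hsub, -⟩ := hHull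
  have hnot1 : ¬ K ⊆ wball 1 (rad - 1) := fun hs => by
    have := hrad.2 (rad - 1) ⟨1, hs⟩; omega
  obtain ⟨y₀, hy₀K, -⟩ := Set.not_subset.mp hnot1
  obtain ⟨i₀, -⟩ : ∃ i, y₀ ∈ g i • K := by
    simpa using hcover hy₀K
  obtain ⟨ℓ, hℓ⟩ : ∃ ℓ, (g i₀).toWord.head? = some ℓ := by
    cases h : (g i₀).toWord with
    | nil => exact absurd (FreeGroup.toWord_eq_nil_iff.mp h) (hg i₀)
    | cons b t => exact ⟨b, rfl⟩
  have hall : ∀ i, (g i).toWord.head? = some ℓ := fun i =>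
    (head_const_on_conn hHconn h1H (hsub ⟨i, rfl⟩) (hsub ⟨i₀, rfl⟩)).trans hℓ
  set a : FreeGroup (Fin r) := FreeGroup.mk [ℓ] with ha
  have hainv : a⁻¹ = FreeGroup.mk [(ℓ.1, !ℓ.2)] := inv_mk_single ℓ
  have hnota : ¬ K ⊆ wball a (rad - 1) := fun hs => by
    have := hrad.2 (rad - 1) ⟨a, hs⟩; omega
  obtain ⟨y, hyK, hy⟩ := Set.not_subset.mp hnota
  have hy' : rad ≤ (a⁻¹ * y).toWord.length := by
    have h' : ¬ wordLen (a⁻¹ * y) ≤ rad - 1 := hy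
    simp only [wordLen] at h'
    omega
  have hlen_le : ∀ z ∈ K, z.toWord.length ≤ rad := fun z hz => by
    have := hcenter hz
    simpa [wball, wordLen] using this
  have hmem : ∀ z ∈ K, ∃ i, (g i)⁻¹ * z ∈ K := fun z hz => by
    have := hcover hz
    simp only [Set.mem_iUnion] at this
    obtain ⟨i, hi⟩ := this
    exact ⟨i, by rw [← smul_eq_mul]; exact Set.mem_smul_set_iff_inv_smul_mem.mp hi⟩
  by_cases hcase : y.toWord.head? = some ℓ
  · have htail : (a⁻¹ * y).toWord = y.toWord.tail := by
      rw [hainv, toWord_single_mul, if_pos (by simpa [Bool.not_not] using hcase)]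
    have hy1 : 1 ≤ y.toWord.length :=
      wordLen_pos y (by rintro rfl; simp [FreeGroup.toWord_one] at hcase)
    have h2 : y.toWord.length ≤ rad := hlen_le y hyK
    rw [htail, List.length_tail] at hy'
    omega
  · have h_ay : (a⁻¹ * y).toWord = (ℓ.1, !ℓ.2) :: y.toWord := by
      rw [hainv, toWord_single_mul, if_neg (by simpa [Bool.not_not] using hcase)]
    have hy1 : rad ≤ y.toWord.length + 1 := by
      rw [h_ay] at hy'; simpa using hy'
    obtain ⟨i, hik⟩ := hmem y hyK
    have hiklen : ((g i)⁻¹ * y).toWord.length = (g i).toWord.length + y.toWord.length :=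
      wordLen_inv_mul' _ _ (by rw [hall i]; exact hcase)
    have hgpos : 1 ≤ (g i).toWord.length := wordLen_pos _ (hg i)
    have hikle : ((g i)⁻¹ * y).toWord.length ≤ rad := hlen_le _ hik
    have hgi1 : (g i).toWord.length = 1 ∧ y.toWord.length + 1 = rad := by omega
    have hgia : g i = a := by
      have hh := hall i
      cases hw : (g i).toWord with
      | nil => rw [hw] at hh; simp at hh
      | cons b t =>
        rw [hw] at hh
        have hb : b = ℓ := by simpa using hh
        have hlen1 := hgi1.1
        rw [hw] at hlen1
        have ht : t = [] := by
          simp only [List.length_cons] at hlen1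
          exact List.length_eq_zero_iff.mp (by omega)
        rw [← FreeGroup.mk_toWord (x := g i), hw, hb, ht, ha]
    have hkK : a⁻¹ * y ∈ K := hgia ▸ hik
    obtain ⟨j, hjk⟩ := hmem _ hkK
    have hjlen : ((g j)⁻¹ * (a⁻¹ * y)).toWord.length
        = (g j).toWord.length + (a⁻¹ * y).toWord.length :=
      wordLen_inv_mul' _ _ (by
        rw [hall j, h_ay]
        simp [Prod.ext_iff])
    have hjle : ((g j)⁻¹ * (a⁻¹ * y)).toWord.length ≤ rad := hlen_le _ hjk
    have hjpos : 1 ≤ (g j).toWord.length := wordLen_pos _ (hg j)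
    have hklen : (a⁻¹ * y).toWord.length = y.toWord.length + 1 := by
      rw [h_ay]; simp
    omega
end

section
/- Let Γ act by measure-preserving transformations α on (X, B_X, ν), by group-automorphisms β on a compact group G with Haar measure μ, with cocycle σ, and form the skew product α ×_σ β on X × G. Let P be a generating partition for α and Q = {gN : g ∈ G} a special partition of G. Let Σ(P,Q) be the smallest (α×_σβ)(Γ)-invariant σ-algebra containing P × Q, and Σ(Q) the smallest β(Γ)-invariant sub-σ-algebra of B_G containing Q. Then Σ(P,Q) equals the smallest σ-algebra containing B_X × Σ(Q), up to sets of measure zero. -/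
open scoped Pointwise

open MeasureTheory

/-- A countable measurable partition. -/
def IsPartition {Ω : Type*} [MeasurableSpace Ω] (P : Set (Set Ω)) : Prop :=
  P.Countable ∧ (∀ A ∈ P, MeasurableSet A) ∧ P.PairwiseDisjoint id ∧ ⋃₀ P = Set.univ

/-- The coset partition `{gN : g ∈ G}`. -/
def cosetPart {G : Type*} [Group G] (N : Subgroup G) : Set (Set G) :=
  Set.range (fun g : G => g • (N : Set G))

/-- Two σ-algebras agree up to `μ`-null sets. -/
def EqModNull {Ω : Type*} [MeasurableSpace Ω] (μ : MeasureTheory.Measure Ω)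
    (m₁ m₂ : MeasurableSpace Ω) : Prop :=
  (∀ A, MeasurableSet[m₁] A → ∃ B, MeasurableSet[m₂] B ∧ μ (symmDiff A B) = 0) ∧
  (∀ B, MeasurableSet[m₂] B → ∃ A, MeasurableSet[m₁] A ∧ μ (symmDiff A B) = 0)

/-- The σ-algebra of sets approximable mod `μ`-null by `m`-measurable sets. -/
def approxSA {Ω : Type*} (mΩ : MeasurableSpace Ω) (μ : Measure Ω) (m : MeasurableSpace Ω) :
    MeasurableSpace Ω where
  MeasurableSet' B := ∃ A, MeasurableSet[m] A ∧ μ (symmDiff A B) = 0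
  measurableSet_empty := ⟨∅, @MeasurableSet.empty _ m, by simp⟩
  measurableSet_compl := by
    rintro B ⟨A, hA, h⟩
    exact ⟨Aᶜ, hA.compl, by rwa [compl_symmDiff_compl]⟩
  measurableSet_iUnion := by
    intro f hf
    choose A hA hnull using hf
    refine ⟨⋃ i, A i, MeasurableSet.iUnion hA,
      measure_mono_null ?_ (measure_iUnion_null hnull)⟩
    intro x hx
    rw [Set.mem_symmDiff] at hx
    rcases hx with ⟨hx1, hx2⟩ | ⟨hx1, hx2⟩
    · obtain ⟨i, hi⟩ := Set.mem_iUnion.1 hx1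
      exact Set.mem_iUnion.2 ⟨i, Set.mem_symmDiff.2 (Or.inl ⟨hi,
        fun h => hx2 (Set.mem_iUnion.2 ⟨i, h⟩)⟩)⟩
    · obtain ⟨i, hi⟩ := Set.mem_iUnion.1 hx1
      exact Set.mem_iUnion.2 ⟨i, Set.mem_symmDiff.2 (Or.inr ⟨hi,
        fun h => hx2 (Set.mem_iUnion.2 ⟨i, h⟩)⟩)⟩

lemma msLe {Ω : Type*} {m m' : MeasurableSpace Ω}
    (h : ∀ s, MeasurableSet[m] s → MeasurableSet[m'] s) : m ≤ m' := h

lemma msLe_apply {Ω : Type*} {m m' : MeasurableSpace Ω} (h : m ≤ m') {s : Set Ω}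
    (hs : MeasurableSet[m] s) : MeasurableSet[m'] s := h s hs

lemma mem_coset_iff {G : Type*} [Group G] (N : Subgroup G) (g x : G) :
    x ∈ g • (N : Set G) ↔ (g : G ⧸ N) = (x : G ⧸ N) := by
  rw [Set.mem_smul_set_iff_inv_smul_mem, smul_eq_mul]
  exact QuotientGroup.eq.symm

lemma preimage_mk_mem_cosetPart {G : Type*} [Group G] (N : Subgroup G) (c : G ⧸ N) :
    (QuotientGroup.mk ⁻¹' {c} : Set G) ∈ cosetPart N := by
  refine ⟨c.out, ?_⟩
  ext x
  simp only [Set.mem_preimage, Set.mem_singleton_iff]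
  rw [mem_coset_iff, QuotientGroup.out_eq', eq_comm]

/-- with `P` a generating partition for `α`, `Q = {gN}` a special
partition of the totally disconnected compact group `G`, `Σ(P,Q)` the smallest
invariant σ-algebra containing `P × Q` for the skew product, and `Σ(Q)` the smallest
`β`-invariant σ-algebra containing `Q`, the σ-algebra `Σ(P,Q)` equals the smallest
σ-algebra containing `B_X × Σ(Q)`, up to `ν×μ`-null sets. -/
theorem skew_invariant_sigma_algebra {Γ X G : Type*} [Group Γ] [Countable Γ]
    [mX : MeasurableSpace X] [Group G] [TopologicalSpace G] [IsTopologicalGroup G]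
    [CompactSpace G] [TotallyDisconnectedSpace G]
    [TopologicalSpace.MetrizableSpace G] [mG : MeasurableSpace G] [BorelSpace G]
    (ν : Measure X) [IsProbabilityMeasure ν]
    (μ : Measure G) [IsProbabilityMeasure μ] [μ.IsHaarMeasure]
    (α : Γ → X → X) (β : Γ → G → G) (σ : Γ → X → G)
    (hα1 : α 1 = id) (hαmul : ∀ g h, α (g * h) = α g ∘ α h)
    (hαmeas : ∀ g, Measurable (α g)) (hαmp : ∀ g, MeasurePreserving (α g) ν ν)
    (hβ1 : β 1 = id) (hβmul : ∀ g h, β (g * h) = β g ∘ β h)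
    (hβhom : ∀ g (a b : G), β g (a * b) = β g a * β g b)
    (hβcont : ∀ g, Continuous (β g)) (hβbij : ∀ g, Function.Bijective (β g))
    (hσmeas : ∀ g, Measurable (σ g))
    (hcoc : ∀ g h x, σ (g * h) x = β g (σ h x) * σ g (α h x))
    (N : Subgroup G) [N.Normal] [N.FiniteIndex] (hN : IsClopen (N : Set G))
    (P : Set (Set X)) (hP : IsPartition P)
    -- `P` is generating for `α`: the smallest `α(Γ)`-invariant σ-algebra
    -- containing `P` is `B_X` up to `ν`-null sets.
    (hPgen : EqModNull ν
      (MeasurableSpace.generateFrom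
        {C : Set X | ∃ g : Γ, ∃ A ∈ P, C = α g ⁻¹' A}) mX) :
    EqModNull (ν.prod μ)
      (MeasurableSpace.generateFrom
        {C : Set (X × G) | ∃ g : Γ, ∃ A ∈ P, ∃ B ∈ cosetPart N,
          C = (fun q : X × G => (α g q.1, β g q.2 * σ g q.1)) ⁻¹' (A ×ˢ B)})
      ((MeasurableSpace.comap Prod.fst mX) ⊔
        (MeasurableSpace.comap Prod.snd
          (MeasurableSpace.generateFrom
            {B' : Set G | ∃ g : Γ, ∃ B ∈ cosetPart N, B' = β g ⁻¹' B}))) := by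
  classical
  set T : Γ → X × G → X × G := fun g q => (α g q.1, β g q.2 * σ g q.1) with hTdef
  set S₁ : Set (Set (X × G)) :=
    {C : Set (X × G) | ∃ g : Γ, ∃ A ∈ P, ∃ B ∈ cosetPart N,
      C = (fun q : X × G => (α g q.1, β g q.2 * σ g q.1)) ⁻¹' (A ×ˢ B)} with hS₁def
  set SQ : Set (Set G) :=
    {B' : Set G | ∃ g : Γ, ∃ B ∈ cosetPart N, B' = β g ⁻¹' B} with hSQdef
  set m₁ := MeasurableSpace.generateFrom S₁ with hm₁def
  -- basic measurability of cosets
  have hcosetMeas : ∀ g : G, MeasurableSet (g • (N : Set G)) := by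
    intro g
    have he : g • (N : Set G) = (fun x => g⁻¹ * x) ⁻¹' (N : Set G) := by
      ext x
      rw [Set.mem_smul_set_iff_inv_smul_mem, smul_eq_mul, Set.mem_preimage]
    rw [he]
    exact (measurable_const_mul g⁻¹) hN.isOpen.measurableSet
  have hQmeas : ∀ c : G ⧸ N, MeasurableSet (QuotientGroup.mk ⁻¹' {c} : Set G) := by
    intro c
    obtain ⟨g, hg⟩ := preimage_mk_mem_cosetPart N c
    rw [← hg]
    exact hcosetMeas g
  -- decomposition 1: basic rectangles of the skew product
  have hdec1 : ∀ (g : Γ) (A : Set X) (g₀ : G),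
      (fun q : X × G => (α g q.1, β g q.2 * σ g q.1)) ⁻¹' (A ×ˢ (g₀ • (N : Set G))) =
      ⋃ c : G ⧸ N, ((α g ⁻¹' A ∩ σ g ⁻¹' (QuotientGroup.mk ⁻¹' {c})) ×ˢ
        (β g ⁻¹' (QuotientGroup.mk ⁻¹' {((g₀ : G ⧸ N) * c⁻¹)}))) := by
    intro g A g₀
    ext ⟨x, h⟩
    simp only [Set.mem_preimage, Set.mem_prod, Set.mem_iUnion, Set.mem_inter_iff,
      Set.mem_singleton_iff]
    rw [mem_coset_iff]
    constructor
    · rintro ⟨h1, h2⟩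
      refine ⟨(σ g x : G ⧸ N), ⟨h1, rfl⟩, ?_⟩
      rw [eq_mul_inv_iff_mul_eq, ← QuotientGroup.mk_mul]
      exact h2.symm
    · rintro ⟨c, ⟨h1, rfl⟩, h2⟩
      refine ⟨h1, ?_⟩
      rw [eq_mul_inv_iff_mul_eq, ← QuotientGroup.mk_mul] at h2
      exact h2.symm
  -- decomposition 2: vertical cylinders over `α g ⁻¹' A`
  have hdec2 : ∀ (g : Γ) (A : Set X),
      Prod.fst ⁻¹' (α g ⁻¹' A) =
      ⋃ c : G ⧸ N, (fun q : X × G => (α g q.1, β g q.2 * σ g q.1)) ⁻¹'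
        (A ×ˢ (QuotientGroup.mk ⁻¹' {c})) := by
    intro g A
    ext ⟨x, h⟩
    simp only [Set.mem_preimage, Set.mem_iUnion, Set.mem_prod, Set.mem_singleton_iff]
    exact ⟨fun hx => ⟨_, hx, rfl⟩, fun ⟨c, hx, _⟩ => hx⟩
  -- decomposition 3: preimages of `univ ×ˢ D`
  have hdec3 : ∀ (g : Γ) (D : Set G),
      (fun q : X × G => (α g q.1, β g q.2 * σ g q.1)) ⁻¹' ((Set.univ : Set X) ×ˢ D) =
      ⋃ A ∈ P, (fun q : X × G => (α g q.1, β g q.2 * σ g q.1)) ⁻¹' (A ×ˢ D) := by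
    intro g D
    ext ⟨x, h⟩
    simp only [Set.mem_preimage, Set.mem_prod, Set.mem_univ, true_and, Set.mem_iUnion]
    constructor
    · intro hD
      have hx : α g x ∈ ⋃₀ P := by rw [hP.2.2.2]; exact Set.mem_univ _
      obtain ⟨A, hA, hxA⟩ := hx
      exact ⟨A, hA, hxA, hD⟩
    · rintro ⟨A, hA, _, hD⟩
      exact hD
  -- decomposition 4: horizontal cylinders over cosets
  have hdec4 : ∀ (g : Γ) (g₀ : G),
      Prod.snd ⁻¹' (β g ⁻¹' (g₀ • (N : Set G))) =
      ⋃ c : G ⧸ N, ((σ g ⁻¹' (QuotientGroup.mk ⁻¹' {c})) ×ˢ (Set.univ : Set G)) ∩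
        ((fun q : X × G => (α g q.1, β g q.2 * σ g q.1)) ⁻¹'
          ((Set.univ : Set X) ×ˢ (QuotientGroup.mk ⁻¹' {((g₀ : G ⧸ N) * c)}))) := by
    intro g g₀
    ext ⟨x, h⟩
    simp only [Set.mem_preimage, Set.mem_iUnion, Set.mem_inter_iff, Set.mem_prod,
      Set.mem_univ, true_and, and_true, Set.mem_singleton_iff]
    rw [mem_coset_iff]
    constructor
    · intro h2
      refine ⟨(σ g x : G ⧸ N), rfl, ?_⟩
      rw [QuotientGroup.mk_mul, ← h2]
    · rintro ⟨c, hc, h2⟩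
      rw [QuotientGroup.mk_mul, hc] at h2
      exact (mul_right_cancel h2).symm
  -- Part 1 : m₁ ≤ m₂ exactly
  have h12 : m₁ ≤ (MeasurableSpace.comap Prod.fst mX) ⊔
      (MeasurableSpace.comap Prod.snd (MeasurableSpace.generateFrom SQ)) := by
    refine MeasurableSpace.generateFrom_le ?_
    rintro C ⟨g, A, hA, B, hB, rfl⟩
    obtain ⟨g₀, hg₀⟩ := hB
    have hg₀' : B = g₀ • (N : Set G) := hg₀.symm
    rw [hg₀', hdec1 g A g₀]
    refine MeasurableSet.iUnion fun c => ?_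
    rw [Set.prod_eq]
    refine MeasurableSet.inter ?_ ?_
    · refine msLe_apply le_sup_left ?_
      exact ⟨α g ⁻¹' A ∩ σ g ⁻¹' (QuotientGroup.mk ⁻¹' {c}),
        ((hαmeas g) (hP.2.1 A hA)).inter ((hσmeas g) (hQmeas c)), rfl⟩
    · refine msLe_apply le_sup_right ?_
      refine ⟨β g ⁻¹' (QuotientGroup.mk ⁻¹' {((g₀ : G ⧸ N) * c⁻¹)}), ?_, rfl⟩
      exact MeasurableSpace.measurableSet_generateFrom
        ⟨g, _, preimage_mk_mem_cosetPart N _, rfl⟩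
  -- Part 2 : m₂ ≤ approxSA Prod.instMeasurableSpace (ν.prod μ) m₁
  have hm₁le : m₁ ≤ approxSA Prod.instMeasurableSpace (ν.prod μ) m₁ := by
    refine msLe fun s hs => ⟨s, hs, ?_⟩
    simp [symmDiff_self]
  have hfst : ∀ s : Set X, MeasurableSet[mX] s →
      MeasurableSet[approxSA Prod.instMeasurableSpace (ν.prod μ) m₁] (Prod.fst ⁻¹' s) := by
    intro s hs
    obtain ⟨A, hA, hnull⟩ := hPgen.2 s hs
    refine ⟨Prod.fst ⁻¹' A, ?_, ?_⟩
    · have hle : MeasurableSpace.comap Prod.fst (MeasurableSpace.generateFrom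
          {C : Set X | ∃ g : Γ, ∃ A ∈ P, C = α g ⁻¹' A}) ≤ m₁ := by
        rw [MeasurableSpace.comap_generateFrom]
        refine MeasurableSpace.generateFrom_le ?_
        rintro C ⟨C', ⟨g, A', hA', rfl⟩, rfl⟩
        rw [hdec2 g A']
        exact MeasurableSet.iUnion fun c =>
          MeasurableSpace.measurableSet_generateFrom
            ⟨g, A', hA', _, preimage_mk_mem_cosetPart N c, rfl⟩
      exact msLe_apply hle ⟨A, hA, rfl⟩
    · rw [← Set.preimage_symmDiff, ← Set.prod_univ, Measure.prod_prod, hnull, zero_mul]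
  have hTuniv : ∀ (g : Γ) (c : G ⧸ N), MeasurableSet[m₁]
      ((fun q : X × G => (α g q.1, β g q.2 * σ g q.1)) ⁻¹'
        ((Set.univ : Set X) ×ˢ (QuotientGroup.mk ⁻¹' {c}))) := by
    intro g c
    rw [hdec3 g _]
    exact MeasurableSet.biUnion hP.1 fun A hA =>
      MeasurableSpace.measurableSet_generateFrom
        ⟨g, A, hA, _, preimage_mk_mem_cosetPart N c, rfl⟩
  have hsnd : ∀ (g : Γ) (g₀ : G), MeasurableSet[approxSA Prod.instMeasurableSpace (ν.prod μ) m₁]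
      (Prod.snd ⁻¹' (β g ⁻¹' (g₀ • (N : Set G)))) := by
    intro g g₀
    rw [hdec4 g g₀]
    refine MeasurableSet.iUnion fun c => MeasurableSet.inter ?_ ?_
    · rw [Set.prod_univ]
      exact hfst _ ((hσmeas g) (hQmeas c))
    · exact msLe_apply hm₁le (hTuniv g _)
  have h2approx : (MeasurableSpace.comap Prod.fst mX) ⊔
      (MeasurableSpace.comap Prod.snd (MeasurableSpace.generateFrom SQ)) ≤
      approxSA Prod.instMeasurableSpace (ν.prod μ) m₁ := by
    refine sup_le ?_ ?_
    · refine msLe ?_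
      rintro s ⟨t, ht, rfl⟩
      exact hfst t ht
    · rw [MeasurableSpace.comap_generateFrom]
      refine MeasurableSpace.generateFrom_le ?_
      rintro C ⟨C', ⟨g, B, hB, rfl⟩, rfl⟩
      obtain ⟨g₀, hg₀⟩ := hB
      have hg₀' : B = g₀ • (N : Set G) := hg₀.symm
      rw [hg₀']
      exact hsnd g g₀
  -- conclusion
  constructor
  · intro A hA
    refine ⟨A, msLe_apply h12 hA, ?_⟩
    simp [symmDiff_self]
  · intro B hB
    exact msLe_apply h2approx hB
end

section
/- Let Γ be a free group of finite rank with generating set S, and let F ⊂ Γ be a finite set with convex hull F̄. Suppose (after translating) that the identity e is a center of F̄. Let γ₀ = e, γ₁, γ₂, ... be any ordering of Γ such that {γ₀,...,γ_n} is connected in the Cayley graph for every n. Then for every n ≥ 1, γ_n·F̄ is not contained in ⋃_{i=0}^{n-1} γ_i·F̄. -/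
open scoped Pointwise

namespace FGAux

variable {α : Type*} [DecidableEq α]

/-- No cancellation between consecutive letters. -/
def NC (a b : α × Bool) : Prop := ¬(a.1 = b.1 ∧ a.2 = !b.2)

lemma reduce_of_chain' : ∀ {L : List (α × Bool)}, List.Chain' NC L → FreeGroup.reduce L = L
  | [], _ => rfl
  | x :: L, h => by
    have hL : FreeGroup.reduce L = L := reduce_of_chain' h.tail
    rw [FreeGroup.reduce.cons, hL]
    cases L with
    | nil => rfl
    | cons y t =>
      have hnc : NC x y := (List.isChain_cons_cons.mp h).1
      exact if_neg hnc

lemma chain'_of_reduce : ∀ {L : List (α × Bool)}, FreeGroup.reduce L = L → List.Chain' NC L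
  | [], _ => List.isChain_nil
  | [x], _ => List.isChain_singleton x
  | x :: y :: t, h => by
    rw [FreeGroup.reduce.cons] at h
    rcases hR : FreeGroup.reduce (y :: t) with _ | ⟨z, s⟩
    · rw [hR] at h
      exact absurd h (by simp)
    · rw [hR] at h
      dsimp only at h
      by_cases hc : x.1 = z.1 ∧ x.2 = !z.2
      · rw [if_pos hc] at h
        have hlen := FreeGroup.Red.length_le (FreeGroup.reduce.red (L := y :: t))
        rw [hR, h] at hlen
        simp only [List.length_cons] at hlen
        exact absurd hlen (by omega)
      · rw [if_neg hc] at h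
        injection h with h1 h2
        injection h2 with h2 h3
        rw [h2, h3] at hR
        rw [h2] at hc
        exact List.isChain_cons_cons.mpr ⟨hc, chain'_of_reduce hR⟩

lemma toWord_chain' (x : FreeGroup α) : List.Chain' NC x.toWord :=
  chain'_of_reduce x.reduce_toWord

lemma mul_toWord_nc (x y : FreeGroup α)
    (h : ∀ a ∈ x.toWord.getLast?, ∀ b ∈ y.toWord.head?, NC a b) :
    (x * y).toWord = x.toWord ++ y.toWord := by
  conv_lhs => rw [← FreeGroup.mk_toWord (x := x), ← FreeGroup.mk_toWord (x := y)]
  rw [FreeGroup.mul_mk, FreeGroup.toWord_mk]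
  exact reduce_of_chain' (List.isChain_append.mpr ⟨toWord_chain' x, toWord_chain' y, h⟩)

/-- The single-letter element of the free group. -/
def lchar (ℓ : α × Bool) : FreeGroup α := FreeGroup.mk [ℓ]

/-- The inverse letter. -/
def linv (ℓ : α × Bool) : α × Bool := (ℓ.1, !ℓ.2)

lemma lchar_toWord (ℓ : α × Bool) : (lchar ℓ).toWord = [ℓ] := by
  rw [lchar, FreeGroup.toWord_mk, FreeGroup.reduce_singleton]

lemma lchar_inv (ℓ : α × Bool) : (lchar ℓ)⁻¹ = lchar (linv ℓ) := by
  rw [lchar, FreeGroup.inv_mk]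
  rfl

lemma linv_mul_head (h : FreeGroup α) (ℓ : α × Bool) (hh : h.toWord.head? ≠ some ℓ) :
    ((lchar ℓ)⁻¹ * h).toWord = linv ℓ :: h.toWord := by
  rw [lchar_inv]
  rw [mul_toWord_nc (lchar (linv ℓ)) h ?_, lchar_toWord, List.singleton_append]
  intro a ha b hb hcon
  rw [lchar_toWord] at ha
  simp only [List.getLast?_singleton, Option.mem_def, Option.some_inj] at ha
  subst ha
  apply hh
  rw [Option.mem_def] at hb
  rw [hb]
  congr 1
  obtain ⟨h1, h2⟩ := hcon
  have : b.2 = ℓ.2 := by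
    simp only [linv] at h2
    simpa using h2.symm
  simp only [linv] at h1
  exact Prod.ext h1.symm this

lemma linv_mul_head' (h : FreeGroup α) (ℓ : α × Bool) (hh : h.toWord.head? = some ℓ) :
    ((lchar ℓ)⁻¹ * h).toWord = h.toWord.tail := by
  obtain ⟨t, ht⟩ : ∃ t, h.toWord = ℓ :: t := by
    cases hw : h.toWord with
    | nil => rw [hw] at hh; simp at hh
    | cons c t =>
      rw [hw] at hh
      simp only [List.head?_cons, Option.some_inj] at hh
      exact ⟨t, by rw [hh]⟩
  have hred : FreeGroup.reduce (ℓ :: t) = ℓ :: t := by rw [← ht]; exact h.reduce_toWord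
  rw [lchar_inv, lchar]
  conv_lhs => rw [← FreeGroup.mk_toWord (x := h)]
  rw [FreeGroup.mul_mk, FreeGroup.toWord_mk, ht, List.singleton_append,
    FreeGroup.reduce.cons, hred]
  simp [linv]

lemma inv_mul_len : ∀ (n : ℕ) (g h : FreeGroup α), g.toWord.length = n →
    g.toWord.head? ≠ h.toWord.head? →
    (g⁻¹ * h).toWord.length = n + h.toWord.length := by
  intro n
  induction n with
  | zero =>
    intro g h hlen _
    have hg : g = 1 := FreeGroup.toWord_eq_nil_iff.mp (List.length_eq_zero_iff.mp hlen)
    rw [hg]; simp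
  | succ n ih =>
    intro g h hlen hne
    obtain ⟨ℓ, t, hg⟩ : ∃ ℓ t, g.toWord = ℓ :: t := by
      cases hw : g.toWord with
      | nil => rw [hw] at hlen; simp at hlen
      | cons c t => exact ⟨c, t, rfl⟩
    set g' : FreeGroup α := FreeGroup.mk t with hg'def
    have htred : FreeGroup.reduce t = t := by
      have := chain'_of_reduce (L := ℓ :: t) (by rw [← hg]; exact g.reduce_toWord)
      exact reduce_of_chain' this.tail
    have hg't : g'.toWord = t := by rw [hg'def, FreeGroup.toWord_mk, htred]
    have hgfact : g = lchar ℓ * g' := by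
      rw [lchar, hg'def, FreeGroup.mul_mk, List.singleton_append, ← hg, FreeGroup.mk_toWord]
    have hhhead : h.toWord.head? ≠ some ℓ := by
      rw [hg] at hne; simpa using fun H => hne (by rw [H, List.head?_cons])
    have hstep : ((lchar ℓ)⁻¹ * h).toWord = linv ℓ :: h.toWord := linv_mul_head h ℓ hhhead
    have hg'head : g'.toWord.head? ≠ some (linv ℓ) := by
      have hch := toWord_chain' g
      rw [hg] at hch; unfold List.Chain' at hch; rw [List.isChain_cons] at hch
      intro H
      have := hch.1 (linv ℓ) (by rw [← hg't]; exact H)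
      exact this ⟨rfl, by simp [linv]⟩
    have hne' : g'.toWord.head? ≠ ((lchar ℓ)⁻¹ * h).toWord.head? := by
      rw [hstep, List.head?_cons]; exact hg'head
    have hlen' : g'.toWord.length = n := by
      rw [hg't]
      have := hlen; rw [hg] at this; simpa using this
    have heq : g⁻¹ * h = g'⁻¹ * ((lchar ℓ)⁻¹ * h) := by
      rw [hgfact, mul_inv_rev, mul_assoc]
    rw [heq, ih g' ((lchar ℓ)⁻¹ * h) hlen' hne', hstep]
    simp only [List.length_cons]
    omega

lemma head_mul_of (g : FreeGroup α) (i : α) (hg : g ≠ 1) (hh : g * FreeGroup.of i ≠ 1) :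
    (g * FreeGroup.of i).toWord.head? = g.toWord.head? := by
  have hgnil : g.toWord ≠ [] := fun H => hg (FreeGroup.toWord_eq_nil_iff.mp H)
  by_cases hl : g.toWord.getLast? = some (i, false)
  · -- cancellation at the end
    set L' := g.toWord.dropLast with hL'
    have hsplit : L' ++ [(i, false)] = g.toWord :=
      List.dropLast_append_getLast? _ hl
    have hprod : g * FreeGroup.of i = FreeGroup.mk L' := by
      conv_lhs => rw [← FreeGroup.mk_toWord (x := g)]
      rw [FreeGroup.of, FreeGroup.mul_mk, ← hsplit, List.append_assoc]
      have : FreeGroup.mk (L' ++ ([(i, false)] ++ [(i, true)])) = FreeGroup.mk (L' ++ []) :=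
        Quot.sound (@FreeGroup.Red.Step.not α L' [] i false)
      rw [this, List.append_nil]
    have hL'red : FreeGroup.reduce L' = L' := by
      apply reduce_of_chain'
      have := toWord_chain' g
      rw [← hsplit] at this
      exact (List.isChain_append.mp this).1
    have hword : (g * FreeGroup.of i).toWord = L' := by
      rw [hprod, FreeGroup.toWord_mk, hL'red]
    have hL'nil : L' ≠ [] := by
      intro H
      apply hh
      rw [← FreeGroup.toWord_eq_nil_iff, hword, H]
    rw [hword, ← hsplit, List.head?_append_of_ne_nil _ hL'nil]
  · -- no cancellation
    have hword : (g * FreeGroup.of i).toWord = g.toWord ++ [(i, true)] := by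
      rw [show (FreeGroup.of i : FreeGroup α) = lchar (i, true) from rfl]
      apply mul_toWord_nc
      intro a ha b hb hcon
      rw [lchar_toWord] at hb
      simp only [List.head?_cons, Option.mem_def, Option.some_inj] at hb
      subst hb
      obtain ⟨h1, h2⟩ := hcon
      simp only at h1 h2
      apply hl
      rw [Option.mem_def] at ha
      rw [ha]
      congr 1
      exact Prod.ext h1 (by simpa using h2)
    rw [hword, List.head?_append_of_ne_nil _ hgnil]

end FGAux


lemma adj_smul {r : ℕ} (k : FreeGroup (Fin r)) {g h : FreeGroup (Fin r)}
    (hadj : (cayley r).Adj g h) : (cayley r).Adj (k * g) (k * h) := by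
  obtain ⟨hne, i, hc | hc⟩ := hadj
  · exact ⟨fun H => hne (mul_left_cancel H), i, Or.inl (by rw [hc, mul_assoc])⟩
  · exact ⟨fun H => hne (mul_left_cancel H), i, Or.inr (by rw [hc, mul_assoc])⟩

lemma head_eq_of_adj {r : ℕ} {g h : FreeGroup (Fin r)} (hadj : (cayley r).Adj g h)
    (hg : g ≠ 1) (hh : h ≠ 1) : g.toWord.head? = h.toWord.head? := by
  obtain ⟨-, i, hc | hc⟩ := hadj
  · rw [hc]; exact (FGAux.head_mul_of g i hg (by rw [← hc]; exact hh)).symm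
  · rw [hc]; exact FGAux.head_mul_of h i hh (by rw [← hc]; exact hg)

lemma head_const_on_conn_s14 {r : ℕ} {S : Set (FreeGroup (Fin r))} (hS : ConnSet S)
    (k : FreeGroup (Fin r)) (hk : ∀ x ∈ S, k * x ≠ 1) :
    ∀ x ∈ S, ∀ y ∈ S, (k * x).toWord.head? = (k * y).toWord.head? := by
  have hS' : ((cayley r).induce S).Connected := hS
  have main : ∀ (u v : {z // z ∈ S}) (w : ((cayley r).induce S).Walk u v),
      (k * u.1).toWord.head? = (k * v.1).toWord.head? := by
    intro u v w
    induction w with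
    | nil => rfl
    | @cons u' v' w' hadj p ih =>
      refine (head_eq_of_adj (adj_smul k ?_) (hk _ u'.2) (hk _ v'.2)).trans ih
      exact hadj
  intro x hx y hy
  obtain ⟨w⟩ := hS'.preconnected ⟨x, hx⟩ ⟨y, hy⟩
  exact main _ _ w

/-- if `e` is a center of the convex hull `F̄` of a finite set `F`, and
`γ₀ = e, γ₁, γ₂, …` is an ordering of the free group such that every initial segment
is connected, then for all `n ≥ 1`, `γₙ·F̄` is not contained in `⋃_{i<n} γᵢ·F̄`. -/
theorem translate_hull_not_covered {r : ℕ} (F Fbar : Set (FreeGroup (Fin r)))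
    (hFfin : F.Finite) (hhull : IsHull F Fbar)
    (rad : ℕ) (hrad : IsRadius Fbar rad) (hcenter : Fbar ⊆ wball 1 rad)
    (γ : ℕ → FreeGroup (Fin r)) (hbij : Function.Bijective γ) (hγ0 : γ 0 = 1)
    (hconn : ∀ n : ℕ, ConnSet (γ '' {i | i ≤ n})) :
    ∀ n : ℕ, 1 ≤ n → ¬ (γ n • Fbar ⊆ ⋃ i < n, γ i • Fbar) := by
  intro n hn hsub
  have hnonempty : Fbar.Nonempty := by
    have hC : ((cayley r).induce Fbar).Connected := hhull.1
    obtain ⟨⟨x, hx⟩⟩ := hC.nonempty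
    exact ⟨x, hx⟩
  set q : ℕ → FreeGroup (Fin r) := fun i => (γ n)⁻¹ * γ i with hq
  have hqne : ∀ i < n, q i ≠ 1 := by
    intro i hi H
    have h2 : γ n = γ i := inv_mul_eq_one.mp H
    have := hbij.1 h2.symm
    omega
  have hcover : ∀ x ∈ Fbar, ∃ i < n, (q i)⁻¹ * x ∈ Fbar := by
    intro x hx
    have hmem : γ n • x ∈ γ n • Fbar := Set.smul_mem_smul_set hx
    obtain ⟨i, hi, hmem'⟩ := Set.mem_iUnion₂.mp (hsub hmem)
    obtain ⟨y, hy, hyx⟩ := hmem'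
    refine ⟨i, hi, ?_⟩
    have hyx' : γ i * y = γ n * x := hyx
    have hxy : (q i)⁻¹ * x = y := by
      rw [hq]
      simp only [mul_inv_rev, inv_inv, mul_assoc]
      rw [← hyx', inv_mul_cancel_left]
    rw [hxy]; exact hy
  have hlen_le : ∀ z ∈ Fbar, z.toWord.length ≤ rad := by
    intro z hz
    have := hcenter hz
    simpa [wball, wordLen] using this
  rcases Nat.eq_zero_or_pos rad with hr0 | hr1
  · obtain ⟨x0, hx0⟩ := hnonempty
    obtain ⟨i, hi, hmem⟩ := hcover x0 hx0
    have h1 : ∀ z ∈ Fbar, z = 1 := fun z hz =>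
      FreeGroup.toWord_eq_nil_iff.mp (List.length_eq_zero_iff.mp
        (le_antisymm (hr0 ▸ hlen_le z hz) (Nat.zero_le _)))
    have h2 := h1 _ hmem
    rw [h1 x0 hx0, mul_one] at h2
    exact hqne i hi (inv_eq_one.mp h2)
  have hS := hconn (n - 1)
  have hSset : {i : ℕ | i ≤ n - 1} = {i : ℕ | i < n} := by ext i; simp; omega
  have hheads : ∀ i < n, ∀ j < n, (q i).toWord.head? = (q j).toWord.head? := by
    intro i hi j hj
    exact head_const_on_conn_s14 hS ((γ n)⁻¹)
      (fun x hx H => by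
        obtain ⟨m, hm, rfl⟩ := hx
        simp only [Set.mem_setOf_eq] at hm
        exact hqne m (by omega) H)
      (γ i) (Set.mem_image_of_mem γ (by simp only [Set.mem_setOf_eq]; omega))
      (γ j) (Set.mem_image_of_mem γ (by simp only [Set.mem_setOf_eq]; omega))
  obtain ⟨a, ha⟩ : ∃ a, (q 0).toWord.head? = some a := by
    cases hw : (q 0).toWord with
    | nil => exact absurd (FreeGroup.toWord_eq_nil_iff.mp hw) (hqne 0 (by omega))
    | cons c t =>
      exact ⟨c, rfl⟩
  have hhead : ∀ i < n, (q i).toWord.head? = some a := fun i hi =>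
    (hheads i hi 0 (by omega)).trans ha
  by_cases hcase : ∃ x ∈ Fbar, x.toWord.length = rad ∧ x.toWord.head? ≠ some a
  · obtain ⟨x, hx, hxlen, hxhead⟩ := hcase
    obtain ⟨i, hi, hmem⟩ := hcover x hx
    have hne : (q i).toWord.head? ≠ x.toWord.head? := by
      rw [hhead i hi]; exact fun H => hxhead H.symm
    have hlen := FGAux.inv_mul_len _ (q i) x rfl hne
    have hle := hlen_le _ hmem
    rw [hlen, hxlen] at hle
    have h0 : (q i).toWord.length = 0 := by omega
    exact hqne i hi (FreeGroup.toWord_eq_nil_iff.mp (List.length_eq_zero_iff.mp h0))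
  · push_neg at hcase
    by_cases hsub2 : Fbar ⊆ wball (FGAux.lchar a) (rad - 1)
    · have := hrad.2 (rad - 1) ⟨_, hsub2⟩; omega
    · obtain ⟨y, hy, hylen⟩ := Set.not_subset.mp hsub2
      simp only [wball, wordLen, Set.mem_setOf_eq, not_le] at hylen
      by_cases hyhead : y.toWord.head? = some a
      · have hw := FGAux.linv_mul_head' y a hyhead
        rw [hw, List.length_tail] at hylen
        have := hlen_le y hy
        omega
      · have hstep := FGAux.linv_mul_head y a hyhead
        have hlen1 : ((FGAux.lchar a)⁻¹ * y).toWord.length = y.toWord.length + 1 := by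
          rw [hstep]; rfl
        rw [hlen1] at hylen
        have hyrad : y.toWord.length = rad - 1 := by
          have h1 := hlen_le y hy
          have h2 : y.toWord.length ≠ rad := fun H => hyhead (hcase y hy H)
          omega
        obtain ⟨i, hi, hmem⟩ := hcover y hy
        have hne2 : (q i).toWord.head? ≠ y.toWord.head? := by
          rw [hhead i hi]; exact fun H => hyhead H.symm
        have hlen2 := FGAux.inv_mul_len _ (q i) y rfl hne2
        have hle := hlen_le _ hmem
        rw [hlen2, hyrad] at hle
        have hq1 : (q i).toWord.length = 1 := by
          have h0 : (q i).toWord.length ≠ 0 := fun H =>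
            hqne i hi (FreeGroup.toWord_eq_nil_iff.mp (List.length_eq_zero_iff.mp H))
          omega
        have hqa : q i = FGAux.lchar a := by
          have hwq : (q i).toWord = [a] := by
            cases hw : (q i).toWord with
            | nil => rw [hw] at hq1; simp at hq1
            | cons c t =>
              rw [hw] at hq1
              simp only [List.length_cons] at hq1
              have ht : t = [] := List.length_eq_zero_iff.mp (by omega)
              subst ht
              have hc := hhead i hi
              rw [hw] at hc
              simp only [List.head?_cons, Option.some_inj] at hc
              rw [hc]
          rw [← FreeGroup.mk_toWord (x := q i), hwq]; rfl
        rw [hqa] at hmem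
        have hz := hcase _ hmem (by rw [hlen1, hyrad]; omega)
        rw [hstep] at hz
        simp only [List.head?_cons, Option.some_inj] at hz
        have hb : (FGAux.linv a).2 = a.2 := by rw [hz]
        simp [FGAux.linv] at hb
end
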